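/- A graph Γ on a countably infinite vertex set contains a spanning subgraph with the extension property (i.e. contains the random graph R as a spanning subgraph) if and only if every finite set of vertices of Γ has a common neighbour, i.e. for every finite set F of vertices there is a vertex z adjacent in Γ to every vertex of F. -/
import Mathlib


/-- The extension property characterising the random graph `R`. -/
def SimpleGraph.HasExtensionProperty {V : Type*} (Γ : SimpleGraph V) : Prop :=
  ∀ U W : Finset V, Disjoint U W →
    ∃ z, z ∉ U ∧ z ∉ W ∧ (∀ u ∈ U, Γ.Adj z u) ∧ (∀ w ∈ W, ¬ Γ.Adj z w)

namespace SpanningRandomAux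

variable {V : Type} [DecidableEq V] (Γ : SimpleGraph V)
  (h : ∀ F : Finset V, ∃ z : V, ∀ v ∈ F, Γ.Adj z v)
  (p : ℕ → Finset V × Finset V)

/-- The finite set of vertices "used" up to stage `n`. -/
noncomputable def used : ℕ → Finset V
  | 0 => ∅
  | n + 1 => used n ∪ (p n).1 ∪ (p n).2 ∪
      {(h ((p n).1 ∪ (p n).2 ∪ used n)).choose}

/-- The witness chosen at stage `n`. -/
noncomputable def zfun (n : ℕ) : V :=
  (h ((p n).1 ∪ (p n).2 ∪ used Γ h p n)).choose

lemma used_succ (n : ℕ) :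
    used Γ h p (n + 1) =
      used Γ h p n ∪ (p n).1 ∪ (p n).2 ∪ {zfun Γ h p n} := rfl

lemma zfun_adj (n : ℕ) :
    ∀ v ∈ (p n).1 ∪ (p n).2 ∪ used Γ h p n, Γ.Adj (zfun Γ h p n) v :=
  (h ((p n).1 ∪ (p n).2 ∪ used Γ h p n)).choose_spec

lemma zfun_not_mem (n : ℕ) :
    zfun Γ h p n ∉ (p n).1 ∪ (p n).2 ∪ used Γ h p n := fun hm =>
  Γ.irrefl (zfun_adj Γ h p n _ hm)

lemma used_mono : Monotone (used Γ h p) := by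
  apply monotone_nat_of_le_succ
  intro n
  rw [used_succ]
  intro x hx
  simp [hx]

lemma zfun_mem_used {m n : ℕ} (hmn : m < n) : zfun Γ h p m ∈ used Γ h p n := by
  apply used_mono Γ h p hmn
  rw [used_succ]; simp

lemma fst_subset_used {m n : ℕ} (hmn : m < n) : (p m).1 ⊆ used Γ h p n := by
  refine subset_trans ?_ (used_mono Γ h p hmn)
  rw [used_succ]; intro x hx; simp [hx]

lemma snd_subset_used {m n : ℕ} (hmn : m < n) : (p m).2 ⊆ used Γ h p n := by
  refine subset_trans ?_ (used_mono Γ h p hmn)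
  rw [used_succ]; intro x hx; simp [hx]

lemma zfun_not_fst (n : ℕ) : zfun Γ h p n ∉ (p n).1 := fun hm =>
  zfun_not_mem Γ h p n (by simp [hm])

lemma zfun_not_snd (n : ℕ) : zfun Γ h p n ∉ (p n).2 := fun hm =>
  zfun_not_mem Γ h p n (by simp [hm])

lemma zfun_not_used (n : ℕ) : zfun Γ h p n ∉ used Γ h p n := fun hm =>
  zfun_not_mem Γ h p n (by simp [hm])

/-- The constructed spanning subgraph. -/
noncomputable def Delta : SimpleGraph V :=
  SimpleGraph.fromRel (fun a b => ∃ n, a = zfun Γ h p n ∧ b ∈ (p n).1)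

lemma Delta_le : Delta Γ h p ≤ Γ := by
  intro a b hab
  obtain ⟨hne, hr | hr⟩ := hab
  · obtain ⟨n, rfl, hb⟩ := hr
    exact zfun_adj Γ h p n b (by simp [hb])
  · obtain ⟨n, rfl, ha⟩ := hr
    exact (zfun_adj Γ h p n a (by simp [ha])).symm

lemma Delta_ext (hp : Function.Surjective p) :
    (Delta Γ h p).HasExtensionProperty := by
  intro U W hUW
  obtain ⟨m, hm⟩ := hp (U, W)
  have hU : (p m).1 = U := by rw [hm]
  have hW : (p m).2 = W := by rw [hm]
  refine ⟨zfun Γ h p m, hU ▸ zfun_not_fst Γ h p m, hW ▸ zfun_not_snd Γ h p m,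
    ?_, ?_⟩
  · intro u hu
    refine ⟨fun he => ?_, Or.inl ⟨m, rfl, hU ▸ hu⟩⟩
    exact zfun_not_fst Γ h p m (hU ▸ he ▸ hu)
  · intro w hw ⟨hne, hr⟩
    have hwW : w ∈ (p m).2 := hW ▸ hw
    rcases hr with ⟨n, hzn, hwn⟩ | ⟨n, hwz, hzn⟩
    · rcases lt_trichotomy n m with hlt | heq | hlt
      · exact zfun_not_used Γ h p m (hzn ▸ zfun_mem_used Γ h p hlt)
      · subst heq
        exact Finset.disjoint_left.mp hUW (hU ▸ hwn) (hW ▸ hwW)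
      · exact zfun_not_used Γ h p n (hzn ▸ zfun_mem_used Γ h p hlt)
    · rcases lt_trichotomy n m with hlt | heq | hlt
      · exact zfun_not_used Γ h p m (fst_subset_used Γ h p hlt hzn)
      · subst heq
        exact zfun_not_fst Γ h p n hzn
      · exact zfun_not_used Γ h p n (hwz ▸ snd_subset_used Γ h p hlt hwW)

end SpanningRandomAux

/-- A countably infinite graph `Γ` contains a spanning subgraph with the extension
property (i.e. contains the random graph `R` as a spanning subgraph) iff every finite
set of vertices of `Γ` has a common neighbour. -/
theorem spanning_random_iff_common_neighbours {V : Type} [Countable V] [Infinite V]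
    (Γ : SimpleGraph V) :
    (∃ Δ : SimpleGraph V, Δ ≤ Γ ∧ Δ.HasExtensionProperty) ↔
    (∀ F : Finset V, ∃ z : V, ∀ v ∈ F, Γ.Adj z v) := by
  classical
  constructor
  · rintro ⟨Δ, hle, hext⟩ F
    obtain ⟨z, _, _, hz, _⟩ := hext F ∅ (Finset.disjoint_empty_right F)
    exact ⟨z, fun v hv => hle (hz v hv)⟩
  · intro h
    obtain ⟨p, hp⟩ := exists_surjective_nat (Finset V × Finset V)
    exact ⟨SpanningRandomAux.Delta Γ h p, SpanningRandomAux.Delta_le Γ h p,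
      SpanningRandomAux.Delta_ext Γ h p hp⟩
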